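/- Let ε₁, ε₂ be nonzero reals with ε₁ ≠ ε₂, [x] = (ε₁^x − ε₂^x)/(ε₁ − ε₂), and lₙ(z^k) = ε₁^(−k)[k−n]z^(k+n). Then the twisted brackets give an su(1,1)-type subalgebra: (ε₁·l₀∘l₁ − ε₂·l₁∘l₀)(z^k) = l₁(z^k) and (ε₁·l₋₁∘l₀ − ε₂·l₀∘l₋₁)(z^k) = l₋₁(z^k) for all integers k. -/
import Mathlib


/-- The (ε₁,ε₂)-deformed number `[n] = (ε₁^n - ε₂^n)/(ε₁ - ε₂)`. -/
noncomputable def dnum (e1 e2 : ℝ) (n : ℤ) : ℝ := (e1 ^ n - e2 ^ n) / (e1 - e2)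

/-- The Laurent monomial `z^k`, as a coefficient function on `ℤ`. -/
noncomputable def zmon (k : ℤ) : ℤ → ℝ := fun j => if j = k then 1 else 0

/-- The deformed Witt generator: `l n (z^k) = ε₁^(-k) * [k-n] * z^(k+n)`. -/
noncomputable def wgen (e1 e2 : ℝ) (n : ℤ) (f : ℤ → ℝ) : ℤ → ℝ :=
  fun j => e1 ^ (-(j - n)) * dnum e1 e2 (j - n - n) * f (j - n)

theorem stmt7 (e1 e2 : ℝ) (h1 : e1 ≠ 0) (h2 : e2 ≠ 0) (hne : e1 ≠ e2) (k : ℤ) :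
    (e1 • wgen e1 e2 0 (wgen e1 e2 1 (zmon k)) - e2 • wgen e1 e2 1 (wgen e1 e2 0 (zmon k))
        = wgen e1 e2 1 (zmon k))
    ∧ (e1 • wgen e1 e2 (-1) (wgen e1 e2 0 (zmon k)) - e2 • wgen e1 e2 0 (wgen e1 e2 (-1) (zmon k))
        = wgen e1 e2 (-1) (zmon k)) := by
  have hsub : e1 - e2 ≠ 0 := sub_ne_zero.mpr hne
  constructor
  · funext j
    simp only [wgen, zmon, dnum, Pi.sub_apply, Pi.smul_apply, smul_eq_mul]
    by_cases hj : j = k + 1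
    · subst hj
      norm_num
      field_simp
      simp only [zpow_add₀ h1, zpow_add₀ h2, zpow_sub₀ h1, zpow_sub₀ h2, zpow_neg, zpow_one,
        zpow_zero]
      field_simp
      ring
    · have c1 : ¬ (j - 0 - 1 = k) := by omega
      have c2 : ¬ (j - 1 - 0 = k) := by omega
      have c3 : ¬ (j - 1 = k) := by omega
      simp [c1, c2, c3, sub_zero]
  · funext j
    simp only [wgen, zmon, dnum, Pi.sub_apply, Pi.smul_apply, smul_eq_mul]
    by_cases hj : j = k - 1
    · subst hj
      norm_num
      field_simp
      simp only [zpow_add₀ h1, zpow_add₀ h2, zpow_sub₀ h1, zpow_sub₀ h2, zpow_neg, zpow_one,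
        zpow_zero]
      field_simp
      ring
    · have c : ¬ (j + 1 = k) := by omega
      simp [sub_neg_eq_add, c]
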